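/- arXiv:0708.2152 — 3 statements merged into one kernel-verified Lean document; each statement's English description precedes it below -/
import Mathlib

section
/- Let d ≥ 1 and let μ be a probability measure on Ω satisfying GEMB(c) for some c > 0. Let f, g : Ω → ℝ be bounded measurable, let ψ : ℤ^d → [0,∞), let u, v ≥ 1 be real numbers with 1/u + 1/v = 3/2, and suppose that δ_i g ≤ (ψ * δf)(i) for every i ∈ ℤ^d, that 0 < ‖ψ‖_u < ∞ and 0 < ‖δf‖_v < ∞. Then for every a ≥ 0, μ{σ : |g(σ) − ∫ g dμ| ≥ a} ≤ 2 exp(−a² / (4c ‖ψ‖_u² ‖δf‖_v²)). -/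
open MeasureTheory Real

noncomputable section

/-- The configuration space `Ω = {0,1}^{ℤ^d}`, encoded as functions `ℤ^d → Bool`,
with the product σ-algebra (the Borel σ-algebra of the product topology). -/
abbrev Config (d : ℕ) := (Fin d → ℤ) → Bool

/-- `flipAt i σ` is the configuration `σ^i` obtained from `σ` by flipping the spin at site `i`. -/
def flipAt {d : ℕ} (i : Fin d → ℤ) (σ : Config d) : Config d :=
  Function.update σ i (!σ i)

/-- The variation of `f` at site `i`: `δ_i f = sup_η (f(η^i) - f(η))`. -/
noncomputable def varAt {d : ℕ} (i : Fin d → ℤ) (f : Config d → ℝ) : ℝ :=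
  ⨆ η : Config d, (f (flipAt i η) - f η)

/-- `μ` satisfies the Gaussian exponential-moment bound GEMB(c). -/
def GEMB {d : ℕ} (μ : Measure (Config d)) (c : ℝ) : Prop :=
  ∀ h : Config d → ℝ, Measurable h → (∃ M, ∀ σ, |h σ| ≤ M) →
    Summable (fun i : Fin d → ℤ => varAt i h ^ 2) →
    ∫ σ, Real.exp (h σ - ∫ τ, h τ ∂μ) ∂μ ≤
      Real.exp (c * ∑' i : Fin d → ℤ, varAt i h ^ 2)

lemma flipAt_flipAt {d : ℕ} (i : Fin d → ℤ) (σ : Config d) : flipAt i (flipAt i σ) = σ := by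
  simp [flipAt, Function.update_idem]

lemma varAt_nonneg {d : ℕ} (i : Fin d → ℤ) (f : Config d → ℝ) : 0 ≤ varAt i f := by
  unfold varAt
  by_cases hb : BddAbove (Set.range fun η : Config d => f (flipAt i η) - f η)
  · have h1 := le_ciSup hb (Classical.arbitrary (Config d))
    have h2 := le_ciSup hb (flipAt i (Classical.arbitrary (Config d)))
    rw [flipAt_flipAt] at h2
    linarith
  · rw [Real.iSup_of_not_bddAbove hb]

lemma varAt_const_mul {d : ℕ} (i : Fin d → ℤ) (f : Config d → ℝ) {t : ℝ} (ht : 0 ≤ t) :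
    varAt i (fun σ => t * f σ) = t * varAt i f := by
  unfold varAt
  rw [Real.mul_iSup_of_nonneg ht]
  exact iSup_congr fun η => by ring

lemma varAt_neg {d : ℕ} (i : Fin d → ℤ) (f : Config d → ℝ) :
    varAt i (fun σ => -f σ) = varAt i f := by
  have hr : Set.range (fun η : Config d => -f (flipAt i η) - -f η)
      = Set.range (fun η : Config d => f (flipAt i η) - f η) := by
    ext x
    constructor
    · rintro ⟨η, rfl⟩; exact ⟨flipAt i η, by simp only [flipAt_flipAt]; ring⟩
    · rintro ⟨η, rfl⟩; exact ⟨flipAt i η, by simp only [flipAt_flipAt]; ring⟩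
  unfold varAt
  rw [← sSup_range, ← sSup_range, hr]

open scoped ENNReal NNReal

lemma tsum_inner_le_Lp_mul_Lq {ι : Type*} (f g : ι → ℝ≥0∞) {p q : ℝ}
    (hpq : p.HolderConjugate q) :
    ∑' i, f i * g i ≤ (∑' i, f i ^ p) ^ (1 / p) * (∑' i, g i ^ q) ^ (1 / q) := by
  rw [ENNReal.tsum_eq_iSup_sum]
  refine iSup_le fun s => le_trans (ENNReal.inner_le_Lp_mul_Lq s f g hpq) ?_
  exact mul_le_mul' (ENNReal.rpow_le_rpow (ENNReal.sum_le_tsum s) hpq.one_div_pos.le)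
    (ENNReal.rpow_le_rpow (ENNReal.sum_le_tsum s) hpq.symm.one_div_pos.le)

lemma young_conv {ι : Type*} [AddCommGroup ι] (Ψ B : ι → ℝ≥0∞) {u v : ℝ}
    (hu : 1 ≤ u) (hv : 1 ≤ v) (huv : 1/u + 1/v = 3/2)
    (hAt : (∑' i, Ψ i ^ u) ≠ ⊤) (hA0 : (∑' i, Ψ i ^ u) ≠ 0)
    (hBt : (∑' i, B i ^ v) ≠ ⊤) (hB0 : (∑' i, B i ^ v) ≠ 0) :
    ∑' i, (∑' k, Ψ (i - k) * B k) ^ (2:ℝ) ≤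
      (∑' i, Ψ i ^ u) ^ (2/u) * (∑' i, B i ^ v) ^ (2/v) := by
  have hu0 : (0:ℝ) < u := lt_of_lt_of_le one_pos hu
  have hv0 : (0:ℝ) < v := lt_of_lt_of_le one_pos hv
  have hu2 : u ≤ 2 := by
    have h1 : 1/v ≤ 1 := by rw [div_le_one hv0]; exact hv
    have h2 : 1/2 ≤ 1/u := by linarith
    calc u = 1/(1/u) := by field_simp
    _ ≤ 1/(1/2) := by
        apply one_div_le_one_div_of_le; norm_num; exact h2
    _ = 2 := by norm_num
  have hv2 : v ≤ 2 := by
    have h1 : 1/u ≤ 1 := by rw [div_le_one hu0]; exact hu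
    have h2 : 1/2 ≤ 1/v := by linarith
    calc v = 1/(1/v) := by field_simp
    _ ≤ 1/(1/2) := by
        apply one_div_le_one_div_of_le; norm_num; exact h2
    _ = 2 := by norm_num
  set A := ∑' i, Ψ i ^ u with hA
  set Bb := ∑' i, B i ^ v with hBb
  -- no term is ⊤
  have hΨt : ∀ i, Ψ i ≠ ⊤ := by
    intro i h
    apply hAt
    have h1 := ENNReal.le_tsum (a := i) (f := fun j => Ψ j ^ u)
    rw [h, ENNReal.top_rpow_of_pos hu0] at h1
    exact top_le_iff.mp h1
  have hBt' : ∀ k, B k ≠ ⊤ := by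
    intro k h
    apply hBt
    have h1 := ENNReal.le_tsum (a := k) (f := fun j => B j ^ v)
    rw [h, ENNReal.top_rpow_of_pos hv0] at h1
    exact top_le_iff.mp h1
  -- shift invariance
  have hshiftL : ∀ i : ι, ∑' k, Ψ (i - k) ^ u = A := by
    intro i
    have := (Equiv.subLeft i).tsum_eq (fun j => Ψ j ^ u)
    simpa [Equiv.subLeft_apply] using this
  have hshiftR : ∀ k : ι, ∑' i, Ψ (i - k) ^ u = A := by
    intro k
    have := (Equiv.subRight k).tsum_eq (fun j => Ψ j ^ u)
    simpa [Equiv.subRight_apply] using this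
  have hshiftL1 : ∀ i : ι, ∑' k, Ψ (i - k) = ∑' j, Ψ j := by
    intro i
    have := (Equiv.subLeft i).tsum_eq Ψ
    simpa [Equiv.subLeft_apply] using this
  -- pointwise factorization
  have split : ∀ x y : ℝ≥0∞, x ≠ ⊤ → y ≠ ⊤ →
      x * y = (x^u * y^v) ^ (1/2:ℝ) * (x^(2-u) * y^(2-v)) ^ (1/2:ℝ) := by
    intro x y hx hy
    rcases eq_or_ne x 0 with rfl | hx0
    · rw [ENNReal.zero_rpow_of_pos hu0, zero_mul, zero_mul,
        ENNReal.zero_rpow_of_pos (by norm_num : (0:ℝ) < 1/2), zero_mul]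
    rcases eq_or_ne y 0 with rfl | hy0
    · rw [ENNReal.zero_rpow_of_pos hv0, mul_zero, mul_zero,
        ENNReal.zero_rpow_of_pos (by norm_num : (0:ℝ) < 1/2), zero_mul]
    rw [← ENNReal.mul_rpow_of_nonneg _ _ (by norm_num : (0:ℝ) ≤ 1/2)]
    have key : x^u * y^v * (x^(2-u) * y^(2-v)) = (x*y)^(2:ℝ) := by
      rw [mul_mul_mul_comm, ← ENNReal.rpow_add _ _ hx0 hx, ← ENNReal.rpow_add _ _ hy0 hy,
        ENNReal.mul_rpow_of_nonneg _ _ (by norm_num : (0:ℝ) ≤ 2)]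
      norm_num
    rw [key, ← ENNReal.rpow_mul]
    norm_num
  -- Cauchy-Schwarz step
  have h22 : Real.HolderConjugate 2 2 := Real.holderConjugate_iff.mpr ⟨one_lt_two, by norm_num⟩
  have CS : ∀ i : ι, (∑' k, Ψ (i-k) * B k) ^ (2:ℝ) ≤
      (∑' k, Ψ (i-k)^u * B k^v) * (∑' k, Ψ (i-k)^(2-u) * B k^(2-v)) := by
    intro i
    have holder := tsum_inner_le_Lp_mul_Lq (fun k => (Ψ (i-k)^u * B k^v) ^ (1/2:ℝ))
        (fun k => (Ψ (i-k)^(2-u) * B k^(2-v)) ^ (1/2:ℝ)) h22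
    simp only [← ENNReal.rpow_mul] at holder
    norm_num at holder
    calc (∑' k, Ψ (i-k) * B k) ^ (2:ℝ)
        = (∑' k, (Ψ (i-k)^u * B k^v) ^ (1/2:ℝ) * (Ψ (i-k)^(2-u) * B k^(2-v)) ^ (1/2:ℝ)) ^ (2:ℝ) := by
          congr 1
          exact tsum_congr fun k => split _ _ (hΨt _) (hBt' _)
      _ ≤ ((∑' k, Ψ (i-k)^u * B k^v) ^ (1/2:ℝ) * (∑' k, Ψ (i-k)^(2-u) * B k^(2-v)) ^ (1/2:ℝ)) ^ (2:ℝ) :=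
          ENNReal.rpow_le_rpow holder (by norm_num)
      _ = (∑' k, Ψ (i-k)^u * B k^v) * (∑' k, Ψ (i-k)^(2-u) * B k^(2-v)) := by
          rw [ENNReal.mul_rpow_of_nonneg _ _ (by norm_num : (0:ℝ) ≤ 2),
            ← ENNReal.rpow_mul, ← ENNReal.rpow_mul]
          norm_num
  -- second factor bound
  have step2 : ∀ i : ι, (∑' k, Ψ (i-k)^(2-u) * B k^(2-v)) ≤ A ^ ((2-u)/u) * Bb ^ ((2-v)/v) := by
    intro i
    rcases eq_or_lt_of_le hu2 with hu2' | hu2'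
    · -- u = 2, so v = 1
      subst hu2'
      have hv1 : v = 1 := by field_simp at huv; linarith
      subst hv1
      simp only [show (2:ℝ)-2 = 0 by norm_num, show (2:ℝ)-1 = 1 by norm_num,
        ENNReal.rpow_zero, ENNReal.rpow_one, one_mul, zero_div, div_one]
      rw [hBb]
      exact le_of_eq (tsum_congr fun k => (ENNReal.rpow_one _).symm)
    rcases eq_or_lt_of_le hv2 with hv2' | hv2'
    · -- v = 2, so u = 1
      subst hv2'
      have hu1 : u = 1 := by field_simp at huv; linarith
      subst hu1
      simp only [show (2:ℝ)-2 = 0 by norm_num, show (2:ℝ)-1 = 1 by norm_num,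
        ENNReal.rpow_zero, ENNReal.rpow_one, mul_one, zero_div, div_one]
      rw [hshiftL1 i, hA]
      exact le_of_eq (tsum_congr fun k => (ENNReal.rpow_one _).symm)
    -- interior case: 1 < u < 2, 1 < v < 2
    have hu1 : 1 < u := by
      rcases eq_or_lt_of_le hu with h1 | h1
      · exfalso
        rw [← h1] at huv
        norm_num at huv
        have : v = 2 := by field_simp at huv; linarith
        exact absurd this (ne_of_lt hv2')
      · exact h1
    have hv1 : 1 < v := by
      rcases eq_or_lt_of_le hv with h1 | h1
      · exfalso
        rw [← h1] at huv
        norm_num at huv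
        have : u = 2 := by field_simp at huv; linarith
        exact absurd this (ne_of_lt hu2')
      · exact h1
    have h2u : (0:ℝ) < 2 - u := by linarith
    have h2v : (0:ℝ) < 2 - v := by linarith
    have hpq : Real.HolderConjugate (u/(2-u)) (v/(2-v)) := by
      rw [Real.holderConjugate_iff]; constructor
      · rw [lt_div_iff₀ h2u]; linarith
      · rw [inv_div, inv_div, div_add_div _ _ (ne_of_gt hu0) (ne_of_gt hv0),
          div_eq_one_iff_eq (by positivity)]
        have huv' : 2*(v + u) = 3*(u*v) := by
          field_simp at huv; linarith
        nlinarith [huv']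
    have holder := tsum_inner_le_Lp_mul_Lq (fun k => Ψ (i-k)^(2-u)) (fun k => B k^(2-v)) hpq
    have e1 : (2-u) * (u/(2-u)) = u := by field_simp
    have e2 : (2-v) * (v/(2-v)) = v := by field_simp
    have e3 : 1/(u/(2-u)) = (2-u)/u := by rw [one_div_div]
    have e4 : 1/(v/(2-v)) = (2-v)/v := by rw [one_div_div]
    simp only [← ENNReal.rpow_mul, e1, e2, e3, e4] at holder
    rwa [hshiftL i, hBb.symm] at holder
  -- sum of first factors
  have sumP : ∑' i : ι, ∑' k, Ψ (i-k)^u * B k^v = A * Bb := by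
    rw [ENNReal.tsum_comm]
    calc ∑' k, ∑' i, Ψ (i-k)^u * B k^v
        = ∑' (k : ι), (∑' i, Ψ (i-k)^u) * B k^v := tsum_congr fun k => ENNReal.tsum_mul_right
      _ = ∑' (k : ι), A * B k^v := tsum_congr fun k => by rw [hshiftR k]
      _ = A * Bb := ENNReal.tsum_mul_left
  -- combine
  calc ∑' i, (∑' k, Ψ (i - k) * B k) ^ (2:ℝ)
      ≤ ∑' i : ι, (∑' k, Ψ (i-k)^u * B k^v) * (A ^ ((2-u)/u) * Bb ^ ((2-v)/v)) :=
        ENNReal.tsum_le_tsum fun i => (CS i).trans (mul_le_mul_right (step2 i) _)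
    _ = (A * Bb) * (A ^ ((2-u)/u) * Bb ^ ((2-v)/v)) := by rw [ENNReal.tsum_mul_right, sumP]
    _ = (A^(1:ℝ) * A ^ ((2-u)/u)) * (Bb^(1:ℝ) * Bb ^ ((2-v)/v)) := by
        rw [ENNReal.rpow_one, ENNReal.rpow_one]; ring
    _ = A ^ (2/u) * Bb ^ (2/v) := by
        rw [← ENNReal.rpow_add _ _ hA0 hAt, ← ENNReal.rpow_add _ _ hB0 hBt]
        rw [show (1:ℝ) + (2-u)/u = 2/u by rw [one_add_div hu0.ne']; ring,
          show (1:ℝ) + (2-v)/v = 2/v by rw [one_add_div hv0.ne']; ring]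

lemma gemb_one_sided {d : ℕ} (μ : Measure (Config d)) [IsProbabilityMeasure μ]
    (c : ℝ) (hc : 0 < c) (hGEMB : GEMB μ c)
    (h : Config d → ℝ) (hm : Measurable h) (hb : ∃ M, ∀ σ, |h σ| ≤ M)
    {K2 : ℝ} (hK2 : 0 < K2) (hsum : Summable (fun i : Fin d → ℤ => varAt i h ^ 2))
    (hS : ∑' i : Fin d → ℤ, varAt i h ^ 2 ≤ K2) {a : ℝ} (ha : 0 ≤ a) :
    (μ {σ | a ≤ h σ - ∫ τ, h τ ∂μ}).toReal ≤ Real.exp (-a^2 / (4*c*K2)) := by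
  obtain ⟨M, hM⟩ := hb
  set m := ∫ τ, h τ ∂μ with hm_def
  set t := a / (2*c*K2) with ht_def
  have ht : 0 ≤ t := by positivity
  have hXmeas : Measurable (fun σ => h σ - m) := hm.sub measurable_const
  have hint : Integrable (fun σ => Real.exp (t * (h σ - m))) μ := by
    refine (integrable_const (Real.exp (t * (M + |m|)))).mono' ?_ ?_
    · exact (Real.measurable_exp.comp (hXmeas.const_mul t)).aestronglyMeasurable
    · refine Filter.Eventually.of_forall fun σ => ?_
      rw [Real.norm_eq_abs, Real.abs_exp]
      apply Real.exp_le_exp.mpr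
      have h1 := hM σ
      have h2 := abs_le.mp h1
      have h3 : |h σ - m| ≤ M + |m| := by
        rcases abs_le.mp h1 with ⟨hl, hr⟩
        rcases abs_cases m with ⟨he, _⟩ | ⟨he, _⟩ <;> rcases abs_cases (h σ - m) with ⟨hf, _⟩ | ⟨hf, _⟩ <;> linarith
      calc t * (h σ - m) ≤ t * |h σ - m| := mul_le_mul_of_nonneg_left (le_abs_self _) ht
        _ ≤ t * (M + |m|) := mul_le_mul_of_nonneg_left h3 ht
  have markov := ProbabilityTheory.measure_ge_le_exp_mul_mgf
    (X := fun σ => h σ - m) (μ := μ) (t := t) a ht hint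
  have hmgf : ProbabilityTheory.mgf (fun σ => h σ - m) μ t
      ≤ Real.exp (c * (t^2 * (∑' i : Fin d → ℤ, varAt i h ^ 2))) := by
    have hbnd : ∃ M', ∀ σ, |t * h σ| ≤ M' := by
      refine ⟨t * M, fun σ => ?_⟩
      rw [abs_mul, abs_of_nonneg ht]
      exact mul_le_mul_of_nonneg_left (hM σ) ht
    have hsum' : Summable (fun i : Fin d → ℤ => varAt i (fun σ => t * h σ) ^ 2) := by
      simp only [varAt_const_mul _ _ ht, mul_pow]
      exact hsum.mul_left _
    have happ := hGEMB (fun σ => t * h σ) (hm.const_mul t) hbnd hsum'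
    have hL : ∫ σ, Real.exp (t * h σ - ∫ τ, t * h τ ∂μ) ∂μ
        = ProbabilityTheory.mgf (fun σ => h σ - m) μ t := by
      rw [ProbabilityTheory.mgf]
      congr 1
      funext σ
      rw [integral_const_mul, hm_def]
      ring_nf
    have hR : (c * ∑' i : Fin d → ℤ, varAt i (fun σ => t * h σ) ^ 2)
        = c * (t^2 * (∑' i : Fin d → ℤ, varAt i h ^ 2)) := by
      congr 1
      simp only [varAt_const_mul _ _ ht, mul_pow]
      rw [tsum_mul_left]
    rw [hL, hR] at happ
    exact happ
  have hfinal : Real.exp (-t * a) * ProbabilityTheory.mgf (fun σ => h σ - m) μ t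
      ≤ Real.exp (-a^2 / (4*c*K2)) := by
    calc Real.exp (-t * a) * ProbabilityTheory.mgf (fun σ => h σ - m) μ t
        ≤ Real.exp (-t * a) * Real.exp (c * (t^2 * K2)) := by
          refine mul_le_mul_of_nonneg_left (hmgf.trans (Real.exp_le_exp.mpr ?_)) (Real.exp_nonneg _)
          have : (0:ℝ) ≤ c * t^2 := by positivity
          nlinarith [hS]
      _ = Real.exp (-t * a + c * (t^2 * K2)) := (Real.exp_add _ _).symm
      _ = Real.exp (-a^2 / (4*c*K2)) := by
          congr 1
          rw [ht_def]
          field_simp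
          ring
  exact markov.trans hfinal


/-- Corollary 3.2 of the paper, two-sided deviation bound:
if `μ` satisfies GEMB(c), `δg ≤ ψ * δf` pointwise, `1/u + 1/v = 3/2`, and
`0 < ‖ψ‖_u < ∞`, `0 < ‖δf‖_v < ∞`, then
`μ(|g - ∫g dμ| ≥ a) ≤ 2 exp(-a²/(4c ‖ψ‖_u² ‖δf‖_v²))`. -/
theorem gemb_two_sided_deviation {d : ℕ} (hd : 1 ≤ d)
    (μ : Measure (Config d)) [IsProbabilityMeasure μ]
    (c : ℝ) (hc : 0 < c) (hGEMB : GEMB μ c)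
    (f g : Config d → ℝ) (hf : Measurable f) (hfb : ∃ M, ∀ σ, |f σ| ≤ M)
    (hg : Measurable g) (hgb : ∃ M, ∀ σ, |g σ| ≤ M)
    (ψ : (Fin d → ℤ) → ℝ) (hψ0 : ∀ i, 0 ≤ ψ i)
    (hdom : ∀ i : Fin d → ℤ, varAt i g ≤ ∑' k : Fin d → ℤ, ψ (i - k) * varAt k f)
    (u v : ℝ) (hu : 1 ≤ u) (hv : 1 ≤ v) (huv : 1 / u + 1 / v = 3 / 2)
    (hψ : Summable (fun i : Fin d → ℤ => ψ i ^ u))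
    (hψpos : 0 < ∑' i : Fin d → ℤ, ψ i ^ u)
    (hfv : Summable (fun i : Fin d → ℤ => varAt i f ^ v))
    (hfvpos : 0 < ∑' i : Fin d → ℤ, varAt i f ^ v)
    (a : ℝ) (ha : 0 ≤ a) :
    (μ {σ | a ≤ |g σ - ∫ τ, g τ ∂μ|}).toReal ≤
      2 * Real.exp (-a ^ 2 / (4 * c * ((∑' i : Fin d → ℤ, ψ i ^ u) ^ (1 / u)) ^ 2 *
        ((∑' i : Fin d → ℤ, varAt i f ^ v) ^ (1 / v)) ^ 2)) := by
  have hu0 : (0:ℝ) < u := lt_of_lt_of_le one_pos hu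
  have hv0 : (0:ℝ) < v := lt_of_lt_of_le one_pos hv
  set A := ∑' i : Fin d → ℤ, ψ i ^ u with hA_def
  set Bv := ∑' i : Fin d → ℤ, varAt i f ^ v with hBv_def
  set b : (Fin d → ℤ) → ℝ := fun k => varAt k f with hb_def
  have hb0 : ∀ k, 0 ≤ b k := fun k => varAt_nonneg k f
  set Ψ : (Fin d → ℤ) → ℝ≥0∞ := fun k => ENNReal.ofReal (ψ k) with hΨ_def
  set Bk : (Fin d → ℤ) → ℝ≥0∞ := fun k => ENNReal.ofReal (b k) with hBk_def
  -- ENNReal sums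
  have hAE : ∑' i, Ψ i ^ u = ENNReal.ofReal A := by
    rw [hA_def, ENNReal.ofReal_tsum_of_nonneg (fun i => Real.rpow_nonneg (hψ0 i) u) hψ]
    exact tsum_congr fun i => (ENNReal.ofReal_rpow_of_nonneg (hψ0 i) hu0.le)
  have hBE : ∑' i, Bk i ^ v = ENNReal.ofReal Bv := by
    rw [hBv_def, ENNReal.ofReal_tsum_of_nonneg (fun i => Real.rpow_nonneg (hb0 i) v) hfv]
    exact tsum_congr fun i => (ENNReal.ofReal_rpow_of_nonneg (hb0 i) hv0.le)
  have hA0' : ENNReal.ofReal A ≠ 0 := by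
    simp only [ne_eq, ENNReal.ofReal_eq_zero, not_le]; exact hψpos
  have hB0' : ENNReal.ofReal Bv ≠ 0 := by
    simp only [ne_eq, ENNReal.ofReal_eq_zero, not_le]; exact hfvpos
  have young := young_conv Ψ Bk hu hv huv
    (by rw [hAE]; exact ENNReal.ofReal_ne_top) (by rw [hAE]; exact hA0')
    (by rw [hBE]; exact ENNReal.ofReal_ne_top) (by rw [hBE]; exact hB0')
  rw [hAE, hBE] at young
  -- pointwise domination in ENNReal
  have hCge : ∀ i : Fin d → ℤ, ENNReal.ofReal (varAt i g) ≤ ∑' k, Ψ (i - k) * Bk k := by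
    intro i
    by_cases hCtop : (∑' k, Ψ (i - k) * Bk k) = ⊤
    · rw [hCtop]; exact le_top
    · have hsum' : Summable (fun k => ψ (i - k) * b k) := by
        have h1 := ENNReal.summable_toReal hCtop
        have h2 : (fun k => ((Ψ (i - k) * Bk k).toReal)) = fun k => ψ (i - k) * b k := by
          funext k
          rw [hΨ_def, hBk_def, ← ENNReal.ofReal_mul (hψ0 _),
            ENNReal.toReal_ofReal (mul_nonneg (hψ0 _) (hb0 _))]
        rwa [h2] at h1
      calc ENNReal.ofReal (varAt i g) ≤ ENNReal.ofReal (∑' k, ψ (i - k) * b k) :=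
            ENNReal.ofReal_le_ofReal (hdom i)
        _ = ∑' k, ENNReal.ofReal (ψ (i - k) * b k) :=
            ENNReal.ofReal_tsum_of_nonneg (fun k => mul_nonneg (hψ0 _) (hb0 _)) hsum'
        _ = ∑' k, Ψ (i - k) * Bk k := tsum_congr fun k => ENNReal.ofReal_mul (hψ0 _)
  have hsqle : ∀ i : Fin d → ℤ,
      ENNReal.ofReal (varAt i g ^ 2) ≤ (∑' k, Ψ (i - k) * Bk k) ^ (2:ℝ) := by
    intro i
    have h1 : ENNReal.ofReal (varAt i g ^ 2) = ENNReal.ofReal (varAt i g) ^ (2:ℝ) := by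
      rw [← Real.rpow_natCast (varAt i g) 2,
        ENNReal.ofReal_rpow_of_nonneg (varAt_nonneg i g) (by norm_num)]
      norm_num
    rw [h1]
    exact ENNReal.rpow_le_rpow (hCge i) (by norm_num)
  have hTsum : ∑' i : Fin d → ℤ, ENNReal.ofReal (varAt i g ^ 2)
      ≤ ENNReal.ofReal A ^ ((2:ℝ)/u) * ENNReal.ofReal Bv ^ ((2:ℝ)/v) :=
    (ENNReal.tsum_le_tsum hsqle).trans young
  have hKtop : ENNReal.ofReal A ^ ((2:ℝ)/u) * ENNReal.ofReal Bv ^ ((2:ℝ)/v) ≠ ⊤ := by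
    apply ENNReal.mul_ne_top <;>
      exact ENNReal.rpow_ne_top_of_nonneg (by positivity) ENNReal.ofReal_ne_top
  have hGsum : Summable (fun i : Fin d → ℤ => varAt i g ^ 2) := by
    have h1 := ENNReal.summable_toReal (lt_of_le_of_lt hTsum hKtop.lt_top).ne
    have h2 : (fun i : Fin d → ℤ => (ENNReal.ofReal (varAt i g ^ 2)).toReal)
        = fun i : Fin d → ℤ => varAt i g ^ 2 := by
      funext i; exact ENNReal.toReal_ofReal (sq_nonneg _)
    rwa [h2] at h1
  set K2 : ℝ := A ^ ((2:ℝ)/u) * Bv ^ ((2:ℝ)/v) with hK2_def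
  have hK2pos : 0 < K2 := by
    apply mul_pos <;> exact Real.rpow_pos_of_pos (by assumption) _
  have hGle : ∑' i : Fin d → ℤ, varAt i g ^ 2 ≤ K2 := by
    have h1 : ENNReal.ofReal (∑' i : Fin d → ℤ, varAt i g ^ 2)
        = ∑' i : Fin d → ℤ, ENNReal.ofReal (varAt i g ^ 2) :=
      ENNReal.ofReal_tsum_of_nonneg (fun i => sq_nonneg _) hGsum
    have h2 : ENNReal.ofReal (∑' i : Fin d → ℤ, varAt i g ^ 2)
        ≤ ENNReal.ofReal A ^ ((2:ℝ)/u) * ENNReal.ofReal Bv ^ ((2:ℝ)/v) := h1 ▸ hTsum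
    have h3 := ENNReal.toReal_mono hKtop h2
    rwa [ENNReal.toReal_ofReal (tsum_nonneg fun i => sq_nonneg _), ENNReal.toReal_mul,
      ← ENNReal.toReal_rpow, ← ENNReal.toReal_rpow,
      ENNReal.toReal_ofReal hψpos.le, ENNReal.toReal_ofReal hfvpos.le] at h3
  -- denominators agree
  have hden : 4 * c * (A ^ (1/u)) ^ 2 * (Bv ^ (1/v)) ^ 2 = 4 * c * K2 := by
    rw [hK2_def, ← Real.rpow_natCast (A ^ (1/u)) 2, ← Real.rpow_natCast (Bv ^ (1/v)) 2,
      ← Real.rpow_mul hψpos.le, ← Real.rpow_mul hfvpos.le]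
    norm_num
    rw [show u⁻¹*2 = 2/u by ring, show v⁻¹*2 = 2/v by ring]
    ring
  rw [hden]
  -- one-sided bounds
  set m := ∫ τ, g τ ∂μ with hm_def
  have hone := gemb_one_sided μ c hc hGEMB g hg hgb hK2pos hGsum hGle ha
  have hgb' : ∃ M, ∀ σ, |(fun σ => -g σ) σ| ≤ M := by
    obtain ⟨M, hM⟩ := hgb
    exact ⟨M, fun σ => by simpa using hM σ⟩
  have hGsum' : Summable (fun i : Fin d → ℤ => varAt i (fun σ => -g σ) ^ 2) := by
    simp only [varAt_neg]; exact hGsum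
  have hGle' : ∑' i : Fin d → ℤ, varAt i (fun σ => -g σ) ^ 2 ≤ K2 := by
    simp only [varAt_neg]; exact hGle
  have hone' := gemb_one_sided μ c hc hGEMB (fun σ => -g σ) hg.neg hgb' hK2pos hGsum' hGle' ha
  have hint_neg : ∫ τ, (fun σ => -g σ) τ ∂μ = -m := by
    rw [hm_def]; exact integral_neg g
  rw [hint_neg] at hone'
  have hset : {σ | a ≤ |g σ - m|} ⊆
      {σ | a ≤ g σ - m} ∪ {σ | a ≤ -g σ - -m} := by
    intro σ hσ
    simp only [Set.mem_setOf_eq] at hσ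
    rcases le_abs.mp hσ with h1 | h1
    · exact Or.inl h1
    · exact Or.inr (by simp only [Set.mem_setOf_eq]; linarith)
  calc (μ {σ | a ≤ |g σ - m|}).toReal
      ≤ (μ ({σ | a ≤ g σ - m} ∪ {σ | a ≤ -g σ - -m})).toReal := by
        apply ENNReal.toReal_mono (measure_ne_top μ _) (measure_mono hset)
    _ ≤ (μ {σ | a ≤ g σ - m}).toReal + (μ {σ | a ≤ -g σ - -m}).toReal := by
        rw [← ENNReal.toReal_add (measure_ne_top μ _) (measure_ne_top μ _)]
        exact ENNReal.toReal_mono (by finiteness) (measure_union_le _ _)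
    _ ≤ Real.exp (-a^2 / (4*c*K2)) + Real.exp (-a^2 / (4*c*K2)) := add_le_add hone hone'
    _ = 2 * Real.exp (-a^2 / (4*c*K2)) := by ring
end
end

section
/- Let γ : ℕ → [0,1) with γ_m ≤ m^{−α} for all m ≥ 1, where α > 1 is real. Let (q_m) be the return probabilities to 0 of the house-of-cards chain with parameters γ started at 0, i.e., q_0 = 1 and q_m = Σ_{j=0}^{m−1} q_{m−1−j} π_j γ_j for m ≥ 1, where π_0 = 1 and π_{j+1} = π_j (1 − γ_j). Then there exists a constant C > 0 such that q_m ≤ C m^{−α} for all m ≥ 1. -/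
set_option maxHeartbeats 1000000




/-- polynomial decay of the return probabilities of the
house-of-cards chain. If the reset probabilities satisfy `γ_m ≤ m^{-α}` with `α > 1`,
then the return probabilities `q_m` (defined by the renewal recursion
`q_0 = 1`, `q_m = ∑_{j=0}^{m-1} q_{m-1-j} π_j γ_j`, where `π_0 = 1` and
`π_{j+1} = π_j (1 - γ_j)`) satisfy `q_m ≤ C m^{-α}` for some constant `C > 0`. -/
theorem houseOfCards_polynomial_decay (α : ℝ) (hα : 1 < α)
    (γ : ℕ → ℝ) (hγ : ∀ m, 0 ≤ γ m ∧ γ m < 1)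
    (hdecay : ∀ m : ℕ, 1 ≤ m → γ m ≤ (m : ℝ) ^ (-α))
    (pi q : ℕ → ℝ)
    (hpi0 : pi 0 = 1) (hpi : ∀ j, pi (j + 1) = pi j * (1 - γ j))
    (hq0 : q 0 = 1)
    (hq : ∀ m : ℕ, 1 ≤ m → q m = ∑ j ∈ Finset.range m, q (m - 1 - j) * pi j * γ j) :
    ∃ C : ℝ, 0 < C ∧ ∀ m : ℕ, 1 ≤ m → q m ≤ C * (m : ℝ) ^ (-α) := by
  have hγ0 : ∀ m, 0 ≤ γ m := fun m => (hγ m).1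
  have hγ1 : ∀ m, γ m < 1 := fun m => (hγ m).2
  have hα0 : (0:ℝ) < α := lt_trans one_pos hα
  -- π positive and ≤ 1
  have hpi_pos : ∀ j, 0 < pi j := by
    intro j; induction j with
    | zero => rw [hpi0]; norm_num
    | succ n ih => rw [hpi n]; exact mul_pos ih (by linarith [hγ1 n])
  have hpi_le : ∀ j, pi j ≤ 1 := by
    intro j; induction j with
    | zero => rw [hpi0]
    | succ n ih =>
      rw [hpi n]
      nlinarith [hγ0 n, hpi_pos n]
  have hpi_anti : ∀ j, pi (j+1) ≤ pi j := by
    intro j; rw [hpi j]; nlinarith [hγ0 j, hpi_pos j]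
  -- telescoping
  have htel : ∀ M, ∑ j ∈ Finset.range M, pi j * γ j = 1 - pi M := by
    intro M; induction M with
    | zero => simp [hpi0]
    | succ n ih =>
      rw [Finset.sum_range_succ, ih, hpi n]; ring
  -- q nonneg
  have hq_nonneg : ∀ m, 0 ≤ q m := by
    intro m; induction m using Nat.strong_induction_on with
    | _ m IH =>
      rcases Nat.eq_zero_or_pos m with h | h
      · rw [h, hq0]; norm_num
      · rw [hq m h]
        refine Finset.sum_nonneg fun j hj => ?_
        have : m - 1 - j < m := by omega
        exact mul_nonneg (mul_nonneg (IH _ this) (hpi_pos j).le) (hγ0 j)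
  -- q ≤ 1
  have hq_le_one : ∀ m, q m ≤ 1 := by
    intro m; induction m using Nat.strong_induction_on with
    | _ m IH =>
      rcases Nat.eq_zero_or_pos m with h | h
      · rw [h, hq0]
      · rw [hq m h]
        calc ∑ j ∈ Finset.range m, q (m - 1 - j) * pi j * γ j
            ≤ ∑ j ∈ Finset.range m, pi j * γ j := by
              refine Finset.sum_le_sum fun j hj => ?_
              have h1 : m - 1 - j < m := by omega
              rw [mul_assoc]
              exact mul_le_of_le_one_left (mul_nonneg (hpi_pos j).le (hγ0 j)) (IH _ h1)
          _ = 1 - pi m := htel m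
          _ ≤ 1 := by linarith [hpi_pos m]
  -- summability
  have hsum : Summable (fun n : ℕ => (n:ℝ) ^ (-α)) := by
    rw [Real.summable_nat_rpow]; linarith
  set T := ∑' n : ℕ, (n:ℝ)^(-α) with hT
  have hterm_nonneg : ∀ n : ℕ, 0 ≤ (n:ℝ)^(-α) := fun n => Real.rpow_nonneg (Nat.cast_nonneg n) _
  have hpartial : ∀ M, ∑ j ∈ Finset.range M, (j:ℝ)^(-α) ≤ T :=
    fun M => Summable.sum_le_tsum _ (fun i _ => hterm_nonneg i) hsum
  -- factor lower bound via exp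
  have hfac : ∀ l : ℕ, 2 ≤ l → Real.exp (-(2 * (l:ℝ)^(-α))) ≤ 1 - γ l := by
    intro l hl
    have hx : γ l ≤ (l:ℝ)^(-α) := hdecay l (by omega)
    have h2l : (2:ℝ) ≤ (l:ℝ) := by exact_mod_cast hl
    have hhalf : (l:ℝ)^(-α) ≤ 1/2 := by
      have h1 : (l:ℝ)^(-α) ≤ (2:ℝ)^(-α) :=
        Real.rpow_le_rpow_of_nonpos two_pos h2l (neg_nonpos.mpr hα0.le)
      have h2 : (2:ℝ)^(-α) ≤ (2:ℝ)^(-1:ℝ) :=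
        Real.rpow_le_rpow_of_exponent_le one_le_two (by linarith)
      have h3 : (2:ℝ)^(-1:ℝ) = 1/2 := by
        rw [Real.rpow_neg_one]; norm_num
      exact le_trans (h1.trans h2) (le_of_eq h3)
    have hg2 : γ l ≤ 1/2 := hx.trans hhalf
    have hgl0 := hγ0 l
    have hexp1 : (1:ℝ) + 2 * γ l ≤ Real.exp (2 * γ l) := by
      have := Real.add_one_le_exp (2 * γ l); linarith
    have hpos1 : (0:ℝ) < 1 + 2 * γ l := by linarith
    have hexp2 : Real.exp (-(2 * γ l)) ≤ (1 + 2 * γ l)⁻¹ := by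
      rw [Real.exp_neg]
      exact inv_anti₀ hpos1 hexp1
    have hexp3 : (1 + 2 * γ l)⁻¹ ≤ 1 - γ l := by
      rw [inv_le_iff_one_le_mul₀ hpos1]
      nlinarith
    have hmono : Real.exp (-(2 * (l:ℝ)^(-α))) ≤ Real.exp (-(2 * γ l)) := by
      apply Real.exp_le_exp.mpr; linarith
    linarith
  -- uniform lower bound on pi
  have key : ∀ M : ℕ, 2 ≤ M →
      pi 2 * Real.exp (-(2 * ∑ l ∈ Finset.Ico 2 M, (l:ℝ)^(-α))) ≤ pi M := by
    intro M hM
    induction M, hM using Nat.le_induction with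
    | base => simp
    | succ n hn ih =>
      rw [Finset.sum_Ico_succ_top hn, hpi n]
      have h1 : pi 2 * Real.exp (-(2 * (∑ l ∈ Finset.Ico 2 n, (l:ℝ)^(-α) + (n:ℝ)^(-α))))
          = (pi 2 * Real.exp (-(2 * ∑ l ∈ Finset.Ico 2 n, (l:ℝ)^(-α)))) * Real.exp (-(2 * (n:ℝ)^(-α))) := by
        rw [mul_assoc, ← Real.exp_add]; exact congrArg (pi 2 * Real.exp ·) (by ring)
      rw [h1]
      have h2 := hfac n hn
      have h3 : (0:ℝ) ≤ Real.exp (-(2 * (n:ℝ)^(-α))) := (Real.exp_pos _).le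
      have h4 : (0:ℝ) ≤ pi 2 * Real.exp (-(2 * ∑ l ∈ Finset.Ico 2 n, (l:ℝ)^(-α))) :=
        mul_nonneg (hpi_pos 2).le (Real.exp_pos _).le
      calc (pi 2 * Real.exp (-(2 * ∑ l ∈ Finset.Ico 2 n, (l:ℝ)^(-α)))) * Real.exp (-(2 * (n:ℝ)^(-α)))
          ≤ pi n * Real.exp (-(2 * (n:ℝ)^(-α))) := mul_le_mul_of_nonneg_right ih h3
        _ ≤ pi n * (1 - γ n) := mul_le_mul_of_nonneg_left h2 (hpi_pos n).le
  have hT_nonneg : 0 ≤ T := tsum_nonneg hterm_nonneg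
  set c : ℝ := pi 2 * Real.exp (-(2 * T)) with hc_def
  have hc_pos : 0 < c := mul_pos (hpi_pos 2) (Real.exp_pos _)
  have hc_le_pi : ∀ M, c ≤ pi M := by
    intro M
    rcases le_or_gt 2 M with hM | hM
    · have h1 : ∑ l ∈ Finset.Ico 2 M, (l:ℝ)^(-α) ≤ T := by
        calc ∑ l ∈ Finset.Ico 2 M, (l:ℝ)^(-α)
            ≤ ∑ l ∈ Finset.range M, (l:ℝ)^(-α) := by
              refine Finset.sum_le_sum_of_subset_of_nonneg ?_ (fun i _ _ => hterm_nonneg i)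
              intro x hx
              simp only [Finset.mem_Ico, Finset.mem_range] at hx ⊢
              omega
          _ ≤ T := hpartial M
      have h2 : Real.exp (-(2*T)) ≤ Real.exp (-(2 * ∑ l ∈ Finset.Ico 2 M, (l:ℝ)^(-α))) := by
        apply Real.exp_le_exp.mpr; linarith
      calc c ≤ pi 2 * Real.exp (-(2 * ∑ l ∈ Finset.Ico 2 M, (l:ℝ)^(-α))) :=
            mul_le_mul_of_nonneg_left h2 (hpi_pos 2).le
        _ ≤ pi M := key M hM
    · have hexp_le : Real.exp (-(2*T)) ≤ 1 := by
        rw [Real.exp_le_one_iff]; linarith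
      have h2 : c ≤ pi 2 := by
        nlinarith [hpi_pos 2]
      have h3 : pi 2 ≤ pi M := by
        interval_cases M
        · calc pi 2 ≤ pi 1 := hpi_anti 1
            _ ≤ pi 0 := hpi_anti 0
        · exact hpi_anti 1
      linarith
  have hc_le_one : c ≤ 1 := (hc_le_pi 0).trans (le_of_eq hpi0)
  have hθ : ∀ M, ∑ j ∈ Finset.range M, pi j * γ j ≤ 1 - c := by
    intro M; rw [htel]; linarith [hc_le_pi M]
  -- renewal identity
  have hren : ∀ m, ∑ k ∈ Finset.range (m+1), q k * pi (m - k) = 1 := by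
    intro m; induction m with
    | zero => simp [hq0, hpi0]
    | succ n ih =>
      rw [Finset.sum_range_succ]
      have hz : n + 1 - (n+1) = 0 := by omega
      rw [hz, hpi0, mul_one]
      have e1 : ∑ k ∈ Finset.range (n+1), q k * pi (n+1-k)
          = ∑ k ∈ Finset.range (n+1), (q k * pi (n-k) - q k * pi (n-k) * γ (n-k)) := by
        refine Finset.sum_congr rfl fun k hk => ?_
        have hk' : k < n + 1 := Finset.mem_range.mp hk
        have h2 : n + 1 - k = (n - k) + 1 := by omega
        rw [h2, hpi]; ring
      rw [e1, Finset.sum_sub_distrib, ih]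
      have e2 : ∑ k ∈ Finset.range (n+1), q k * pi (n-k) * γ (n-k) = q (n+1) := by
        have hrefl := Finset.sum_range_reflect (fun j => q (n - j) * pi j * γ j) (n+1)
        rw [hq (n+1) (by omega)]
        simp only [Nat.add_sub_cancel]
        rw [← hrefl]
        refine Finset.sum_congr rfl fun k hk => ?_
        have hk' : k < n + 1 := Finset.mem_range.mp hk
        have h3 : n + 1 - 1 - k = n - k := by omega
        have h4 : n - (n - k) = k := by omega
        simp only [h3, h4]
      rw [e2]; ring
  -- sum of q bounded
  have hQsum : ∀ M, ∑ k ∈ Finset.range M, q k ≤ 1/c := by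
    intro M
    rcases Nat.eq_zero_or_pos M with h | h
    · rw [h]; simp; positivity
    obtain ⟨n, rfl⟩ : ∃ n, M = n+1 := ⟨M-1, by omega⟩
    have h1 : c * ∑ k ∈ Finset.range (n+1), q k ≤ 1 := by
      rw [← hren n, Finset.mul_sum]
      refine Finset.sum_le_sum fun k hk => ?_
      rw [mul_comm]
      exact mul_le_mul_of_nonneg_left (hc_le_pi (n-k)) (hq_nonneg k)
    rw [le_div_iff₀ hc_pos, mul_comm]
    exact h1
  set U : ℝ := 1/c with hU_def
  have hU_pos : 0 < U := by positivity
  set ε : ℝ := c/4 * (4:ℝ)^(-α) with hε_def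
  have h4pow_pos : (0:ℝ) < (4:ℝ)^(-α) := Real.rpow_pos_of_pos (by norm_num) _
  have hε_pos : 0 < ε := mul_pos (by linarith) h4pow_pos
  -- find the tail cutoff J
  obtain ⟨N, hN⟩ : ∃ N : ℕ, ∀ n, N ≤ n → T - ∑ j ∈ Finset.range n, (j:ℝ)^(-α) < ε := by
    have h3 := hsum.hasSum.tendsto_sum_nat
    have h2 : Filter.Tendsto (fun n => T - ∑ j ∈ Finset.range n, (j:ℝ)^(-α))
        Filter.atTop (nhds 0) := by
      have := Filter.Tendsto.sub (tendsto_const_nhds (x := T) (f := Filter.atTop)) h3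
      simpa [← hT] using this
    have h4 := h2.eventually_lt_const hε_pos
    exact Filter.eventually_atTop.mp h4
  set J : ℕ := max N 2 with hJ_def
  have hJ2 : 2 ≤ J := le_max_right _ _
  have hJtail : ∀ M : ℕ, ∑ j ∈ Finset.Ico J M, (j:ℝ)^(-α) ≤ ε := by
    intro M
    rcases le_or_gt J M with h | h
    · rw [Finset.sum_Ico_eq_sub _ h]
      have h5 := hN J (le_max_left _ _)
      linarith [hpartial M]
    · rw [Finset.Ico_eq_empty (by omega)]
      simp only [Finset.sum_empty]
      exact hε_pos.le
  -- the exponent comparison constant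
  set c' : ℝ := (1 + c/4)^(α⁻¹) - 1 with hc'_def
  have hc'_pos : 0 < c' := by
    have h6 : (1:ℝ) < (1 + c/4)^(α⁻¹) :=
      (Real.one_lt_rpow_iff_of_pos (by linarith)).mpr (Or.inl ⟨by linarith, by positivity⟩)
    rw [hc'_def]; linarith
  have h1c' : 1 + c' = (1 + c/4)^(α⁻¹) := by rw [hc'_def]; ring
  have h1c'pow : ((1 + c/4)^(α⁻¹))^α = 1 + c/4 := by
    rw [← Real.rpow_mul (by linarith : (0:ℝ) ≤ 1 + c/4), inv_mul_cancel₀ (ne_of_gt hα0),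
      Real.rpow_one]
  set m₀ : ℕ := max (max 4 (J+2)) (J + ⌈(J:ℝ)/c'⌉₊ + 1) with hm₀_def
  have hm₀4 : 4 ≤ m₀ := le_trans (le_max_left _ _) (le_max_left _ _)
  -- key rpow bound for the head of the sum
  have hA : ∀ m : ℕ, m₀ ≤ m → ((m:ℝ) - J)^(-α) ≤ (1 + c/4) * (m:ℝ)^(-α) := by
    intro m hm
    have hmJ : J + 2 ≤ m := le_trans (le_trans (le_max_right 4 (J+2)) (le_max_left _ _)) hm
    have hmceil : J + ⌈(J:ℝ)/c'⌉₊ + 1 ≤ m := le_trans (le_max_right _ _) hm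
    have hx_pos : (0:ℝ) < (m:ℝ) - J := by
      have h5 : ((J:ℝ) + 2) ≤ (m:ℝ) := by exact_mod_cast hmJ
      linarith
    have hxc : (J:ℝ)/c' ≤ (m:ℝ) - J := by
      have h5 : ((J:ℝ) + ⌈(J:ℝ)/c'⌉₊) ≤ (m:ℝ) := by exact_mod_cast by omega
      have h6 := Nat.le_ceil ((J:ℝ)/c')
      linarith
    have hmle : (m:ℝ) ≤ (1 + c') * ((m:ℝ) - J) := by
      rw [div_le_iff₀ hc'_pos] at hxc
      nlinarith
    have hpow : (m:ℝ)^α ≤ (1 + c/4) * ((m:ℝ) - J)^α := by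
      calc (m:ℝ)^α ≤ ((1 + c') * ((m:ℝ) - J))^α :=
            Real.rpow_le_rpow (by positivity) hmle hα0.le
        _ = (1 + c')^α * ((m:ℝ) - J)^α :=
            Real.mul_rpow (by linarith) hx_pos.le
        _ = (1 + c/4) * ((m:ℝ) - J)^α := by rw [h1c', h1c'pow]
    have hxpow_pos : (0:ℝ) < ((m:ℝ) - J)^α := Real.rpow_pos_of_pos hx_pos _
    have hmpow_pos : (0:ℝ) < (m:ℝ)^α := Real.rpow_pos_of_pos (by linarith) _
    have h7 : ((1 + c/4) * ((m:ℝ) - J)^α)⁻¹ ≤ ((m:ℝ)^α)⁻¹ := inv_anti₀ hmpow_pos hpow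
    have h8 : ((m:ℝ) - J)^(-α) = (1 + c/4) * ((1 + c/4) * ((m:ℝ) - J)^α)⁻¹ := by
      rw [Real.rpow_neg hx_pos.le]
      field_simp
    rw [h8, Real.rpow_neg (by linarith : (0:ℝ) ≤ (m:ℝ))]
    exact mul_le_mul_of_nonneg_left h7 (by linarith)
  -- the constant
  have h2pow_pos : (0:ℝ) < (2:ℝ)^α := Real.rpow_pos_of_pos two_pos _
  set C : ℝ := max ((m₀:ℝ)^α) (2 * (2:ℝ)^α / (c*c)) with hC_def
  have hm₀pos : (0:ℝ) < (m₀:ℝ) := by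
    have : (4:ℝ) ≤ (m₀:ℝ) := by exact_mod_cast hm₀4
    linarith
  have hC_pos : 0 < C := lt_max_iff.mpr (Or.inl (Real.rpow_pos_of_pos hm₀pos _))
  have hcoef : C * ((1+c/4) * (1-c)) + C * (c/4) + (2:ℝ)^α * U ≤ C := by
    have hC2 : 2 * (2:ℝ)^α / (c*c) ≤ C := le_max_right _ _
    have hC2' : 2 * (2:ℝ)^α ≤ C * (c*c) := by
      rw [div_le_iff₀ (by positivity)] at hC2; linarith
    have hcU : c * U = 1 := by rw [hU_def]; field_simp
    have h1 : (2:ℝ)^α * U ≤ C * c / 2 := by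
      have h2 : 2 * (2:ℝ)^α * U ≤ C * (c*c) * U := mul_le_mul_of_nonneg_right hC2' hU_pos.le
      have h3 : C * (c*c) * U = C * c * (c * U) := by ring
      rw [h3, hcU] at h2
      linarith
    nlinarith [mul_nonneg (mul_nonneg hC_pos.le hc_pos.le) hc_pos.le]
  refine ⟨C, hC_pos, ?_⟩
  intro m
  induction m using Nat.strong_induction_on with
  | _ m IH =>
    intro hm1
    have hmpos : (0:ℝ) < (m:ℝ) := by exact_mod_cast hm1
    have hMα : (0:ℝ) < (m:ℝ)^(-α) := Real.rpow_pos_of_pos hmpos _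
    rcases lt_or_ge m m₀ with hcase | hcase
    · -- small m
      have h1 : (m:ℝ)^α ≤ (m₀:ℝ)^α :=
        Real.rpow_le_rpow hmpos.le (by exact_mod_cast hcase.le) hα0.le
      have h2 : (m:ℝ)^α * (m:ℝ)^(-α) = 1 := by
        rw [← Real.rpow_add hmpos]; simp
      have h3 : (m₀:ℝ)^α ≤ C := le_max_left _ _
      calc q m ≤ 1 := hq_le_one m
        _ = (m:ℝ)^α * (m:ℝ)^(-α) := h2.symm
        _ ≤ C * (m:ℝ)^(-α) := mul_le_mul_of_nonneg_right (h1.trans h3) hMα.le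
    · -- large m
      have hmJ2 : J + 2 ≤ m := le_trans (le_trans (le_max_right 4 (J+2)) (le_max_left _ _)) hcase
      have hm4 : 4 ≤ m := le_trans hm₀4 hcase
      set B := (Finset.Ico J m).filter (fun j => 2*j < m) with hB_def
      set Cs := (Finset.Ico J m).filter (fun j => ¬ 2*j < m) with hCs_def
      have hsplit : q m = (∑ j ∈ Finset.range J, q (m-1-j) * pi j * γ j)
          + ((∑ j ∈ B, q (m-1-j) * pi j * γ j) + (∑ j ∈ Cs, q (m-1-j) * pi j * γ j)) := by
        rw [hq m (by omega), ← Finset.sum_range_add_sum_Ico _ (show J ≤ m by omega),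
          ← Finset.sum_filter_add_sum_filter_not (Finset.Ico J m) (fun j => 2*j < m)]
      -- head
      have hbA : ∑ j ∈ Finset.range J, q (m-1-j) * pi j * γ j
          ≤ (C * ((1+c/4) * (m:ℝ)^(-α))) * (1 - c) := by
        have hK_nonneg : 0 ≤ C * ((1+c/4) * (m:ℝ)^(-α)) := by positivity
        calc ∑ j ∈ Finset.range J, q (m-1-j) * pi j * γ j
            ≤ ∑ j ∈ Finset.range J, (C * ((1+c/4) * (m:ℝ)^(-α))) * (pi j * γ j) := by
              refine Finset.sum_le_sum fun j hj => ?_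
              have hjJ : j < J := Finset.mem_range.mp hj
              have hk1 : 1 ≤ m - 1 - j := by omega
              have hkm : m - 1 - j < m := by omega
              have hIHk := IH _ hkm hk1
              have hcast : (m:ℝ) - J ≤ ((m-1-j : ℕ):ℝ) := by
                have h5 : (m - J : ℕ) ≤ m - 1 - j := by omega
                have h6 : ((m - J : ℕ):ℝ) = (m:ℝ) - J := by
                  rw [Nat.cast_sub (by omega)]
                rw [← h6]; exact_mod_cast h5
              have hx_pos : (0:ℝ) < (m:ℝ) - J := by
                have h9 : ((J:ℝ) + 2) ≤ (m:ℝ) := by exact_mod_cast hmJ2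
                linarith
              have h7 : ((m-1-j:ℕ):ℝ)^(-α) ≤ ((m:ℝ) - J)^(-α) :=
                Real.rpow_le_rpow_of_nonpos hx_pos hcast (neg_nonpos.mpr hα0.le)
              have h8 := hA m hcase
              have hqb : q (m-1-j) ≤ C * ((1+c/4) * (m:ℝ)^(-α)) := by
                calc q (m-1-j) ≤ C * ((m-1-j:ℕ):ℝ)^(-α) := hIHk
                  _ ≤ C * ((1+c/4) * (m:ℝ)^(-α)) :=
                    mul_le_mul_of_nonneg_left (h7.trans h8) hC_pos.le
              rw [mul_assoc]
              exact mul_le_mul_of_nonneg_right hqb (mul_nonneg (hpi_pos j).le (hγ0 j))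
          _ = (C * ((1+c/4) * (m:ℝ)^(-α))) * ∑ j ∈ Finset.range J, pi j * γ j := by
              rw [Finset.mul_sum]
          _ ≤ (C * ((1+c/4) * (m:ℝ)^(-α))) * (1 - c) :=
              mul_le_mul_of_nonneg_left (hθ J) hK_nonneg
      -- middle
      have hbB : ∑ j ∈ B, q (m-1-j) * pi j * γ j ≤ (C * ((4:ℝ)^α * (m:ℝ)^(-α))) * ε := by
        have hD_nonneg : (0:ℝ) ≤ C * ((4:ℝ)^α * (m:ℝ)^(-α)) := by positivity
        calc ∑ j ∈ B, q (m-1-j) * pi j * γ j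
            ≤ ∑ j ∈ B, (C * ((4:ℝ)^α * (m:ℝ)^(-α))) * ((j:ℝ)^(-α)) := by
              refine Finset.sum_le_sum fun j hj => ?_
              have hj' := Finset.mem_filter.mp hj
              obtain ⟨hjJ, hjm⟩ := Finset.mem_Ico.mp hj'.1
              have hj2m : 2*j < m := hj'.2
              have hk1 : 1 ≤ m - 1 - j := by omega
              have hkm : m - 1 - j < m := by omega
              have hIHk := IH _ hkm hk1
              have hj1 : 1 ≤ j := by omega
              have hcast : ((m-1-j:ℕ):ℝ) = (m:ℝ) - 1 - j := by
                rw [Nat.cast_sub (by omega : j ≤ m - 1), Nat.cast_sub (by omega : 1 ≤ m)]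
                norm_num
              have hjhalf : 2 * (j:ℝ) + 1 ≤ (m:ℝ) := by exact_mod_cast (by omega : 2*j+1 ≤ m)
              have hm4' : (4:ℝ) ≤ (m:ℝ) := by exact_mod_cast hm4
              have hquarter : (m:ℝ)/4 ≤ ((m-1-j:ℕ):ℝ) := by
                rw [hcast]; linarith
              have hm4pos : (0:ℝ) < (m:ℝ)/4 := by positivity
              have h7 : ((m-1-j:ℕ):ℝ)^(-α) ≤ ((m:ℝ)/4)^(-α) :=
                Real.rpow_le_rpow_of_nonpos hm4pos hquarter (neg_nonpos.mpr hα0.le)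
              have h8 : ((m:ℝ)/4)^(-α) = (4:ℝ)^α * (m:ℝ)^(-α) := by
                rw [Real.div_rpow hmpos.le (by norm_num : (0:ℝ) ≤ 4),
                  Real.rpow_neg (by norm_num : (0:ℝ) ≤ 4), div_inv_eq_mul]
                ring
              have hqb : q (m-1-j) ≤ C * ((4:ℝ)^α * (m:ℝ)^(-α)) := by
                calc q (m-1-j) ≤ C * ((m-1-j:ℕ):ℝ)^(-α) := hIHk
                  _ ≤ _ := mul_le_mul_of_nonneg_left (h7.trans_eq h8) hC_pos.le
              have hpg : pi j * γ j ≤ (j:ℝ)^(-α) :=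
                le_trans (mul_le_of_le_one_left (hγ0 j) (hpi_le j)) (hdecay j hj1)
              rw [mul_assoc]
              exact mul_le_mul hqb hpg (mul_nonneg (hpi_pos j).le (hγ0 j)) hD_nonneg
          _ = (C * ((4:ℝ)^α * (m:ℝ)^(-α))) * ∑ j ∈ B, (j:ℝ)^(-α) := by rw [Finset.mul_sum]
          _ ≤ (C * ((4:ℝ)^α * (m:ℝ)^(-α))) * ε := by
              refine mul_le_mul_of_nonneg_left ?_ hD_nonneg
              calc ∑ j ∈ B, (j:ℝ)^(-α)
                  ≤ ∑ j ∈ Finset.Ico J m, (j:ℝ)^(-α) :=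
                    Finset.sum_le_sum_of_subset_of_nonneg (Finset.filter_subset _ _)
                      (fun i _ _ => hterm_nonneg i)
                _ ≤ ε := hJtail m
      -- tail
      have hbC : ∑ j ∈ Cs, q (m-1-j) * pi j * γ j ≤ ((2:ℝ)^α * (m:ℝ)^(-α)) * U := by
        have hD2_nonneg : (0:ℝ) ≤ (2:ℝ)^α * (m:ℝ)^(-α) := by positivity
        have hstep : ∀ j ∈ Cs, q (m-1-j) * pi j * γ j
            ≤ ((2:ℝ)^α * (m:ℝ)^(-α)) * q (m-1-j) := by
          intro j hj
          have hj' := Finset.mem_filter.mp hj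
          obtain ⟨hjJ, hjm⟩ := Finset.mem_Ico.mp hj'.1
          have hj2m : ¬ 2*j < m := hj'.2
          have hj1 : 1 ≤ j := by omega
          have hjhalf : (m:ℝ)/2 ≤ (j:ℝ) := by
            have h9 : (m:ℝ) ≤ 2*(j:ℝ) := by exact_mod_cast (by omega : m ≤ 2*j)
            linarith
          have hm2pos : (0:ℝ) < (m:ℝ)/2 := by positivity
          have h7 : ((j:ℕ):ℝ)^(-α) ≤ ((m:ℝ)/2)^(-α) :=
            Real.rpow_le_rpow_of_nonpos hm2pos hjhalf (neg_nonpos.mpr hα0.le)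
          have h8 : ((m:ℝ)/2)^(-α) = (2:ℝ)^α * (m:ℝ)^(-α) := by
            rw [Real.div_rpow hmpos.le (by norm_num : (0:ℝ) ≤ 2),
              Real.rpow_neg (by norm_num : (0:ℝ) ≤ 2), div_inv_eq_mul]
            ring
          have hpg : pi j * γ j ≤ (2:ℝ)^α * (m:ℝ)^(-α) :=
            le_trans (le_trans (mul_le_of_le_one_left (hγ0 j) (hpi_le j)) (hdecay j hj1))
              (h7.trans_eq h8)
          calc q (m-1-j) * pi j * γ j = q (m-1-j) * (pi j * γ j) := by ring
            _ ≤ q (m-1-j) * ((2:ℝ)^α * (m:ℝ)^(-α)) :=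
                mul_le_mul_of_nonneg_left hpg (hq_nonneg _)
            _ = ((2:ℝ)^α * (m:ℝ)^(-α)) * q (m-1-j) := by ring
        calc ∑ j ∈ Cs, q (m-1-j) * pi j * γ j
            ≤ ∑ j ∈ Cs, ((2:ℝ)^α * (m:ℝ)^(-α)) * q (m-1-j) := Finset.sum_le_sum hstep
          _ = ((2:ℝ)^α * (m:ℝ)^(-α)) * ∑ j ∈ Cs, q (m-1-j) := by rw [Finset.mul_sum]
          _ ≤ ((2:ℝ)^α * (m:ℝ)^(-α)) * U := by
              refine mul_le_mul_of_nonneg_left ?_ hD2_nonneg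
              calc ∑ j ∈ Cs, q (m-1-j)
                  ≤ ∑ j ∈ Finset.range m, q (m-1-j) := by
                    refine Finset.sum_le_sum_of_subset_of_nonneg ?_ (fun i _ _ => hq_nonneg _)
                    intro x hx
                    have hx' : x ∈ Finset.Ico J m := Finset.mem_of_mem_filter x hx
                    simp only [Finset.mem_Ico, Finset.mem_range] at hx' ⊢
                    omega
                _ = ∑ k ∈ Finset.range m, q k := Finset.sum_range_reflect (fun k => q k) m
                _ ≤ U := by rw [hU_def]; exact hQsum m
      -- combine
      have hBepsEq : (C * ((4:ℝ)^α * (m:ℝ)^(-α))) * ε = C * (c/4) * (m:ℝ)^(-α) := by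
        rw [hε_def]
        have h44 : (4:ℝ)^α * (4:ℝ)^(-α) = 1 := by
          rw [← Real.rpow_add (by norm_num : (0:ℝ) < 4)]; simp
        calc C * ((4:ℝ)^α * (m:ℝ)^(-α)) * (c/4 * (4:ℝ)^(-α))
            = C * (c/4) * (m:ℝ)^(-α) * ((4:ℝ)^α * (4:ℝ)^(-α)) := by ring
          _ = C * (c/4) * (m:ℝ)^(-α) := by rw [h44, mul_one]
      have hfin : (C * ((1+c/4) * (m:ℝ)^(-α))) * (1-c) + C * (c/4) * (m:ℝ)^(-α)
          + ((2:ℝ)^α * (m:ℝ)^(-α)) * U ≤ C * (m:ℝ)^(-α) := by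
        calc (C * ((1+c/4) * (m:ℝ)^(-α))) * (1-c) + C * (c/4) * (m:ℝ)^(-α)
              + ((2:ℝ)^α * (m:ℝ)^(-α)) * U
            = (C * ((1+c/4) * (1-c)) + C * (c/4) + (2:ℝ)^α * U) * (m:ℝ)^(-α) := by ring
          _ ≤ C * (m:ℝ)^(-α) := mul_le_mul_of_nonneg_right hcoef hMα.le
      rw [hsplit]
      have hbB' := hbB.trans_eq hBepsEq
      linarith [hbA, hbB', hbC, hfin]
end

section
/- Let γ : ℕ → [0,1) and α > 0 real with γ_m ≤ e^{−α m} for all m ∈ ℕ. Let (q_m) be the return probabilities to 0 of the house-of-cards chain with parameters γ started at 0, i.e., q_0 = 1 and q_m = Σ_{j=0}^{m−1} q_{m−1−j} π_j γ_j for m ≥ 1, where π_0 = 1 and π_{j+1} = π_j (1 − γ_j). Then there exist constants C > 0 and α' with 0 < α' ≤ α such that q_m ≤ C e^{−α' m} for all m ∈ ℕ. -/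
/-- Weierstrass product inequality. -/
lemma hoc_weier (f : ℕ → ℝ) : ∀ s : Finset ℕ, (∀ i ∈ s, 0 ≤ f i) → (∀ i ∈ s, f i ≤ 1) →
    1 - ∑ i ∈ s, f i ≤ ∏ i ∈ s, (1 - f i) := by
  classical
  intro s
  induction s using Finset.induction_on with
  | empty => simp
  | @insert a s ha ih =>
    intro h0 h1
    rw [Finset.sum_insert ha, Finset.prod_insert ha]
    have hfa0 := h0 a (Finset.mem_insert_self a s)
    have hfa1 := h1 a (Finset.mem_insert_self a s)
    have ihs := ih (fun i hi => h0 i (Finset.mem_insert_of_mem hi))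
      (fun i hi => h1 i (Finset.mem_insert_of_mem hi))
    have hsum : 0 ≤ ∑ i ∈ s, f i :=
      Finset.sum_nonneg fun i hi => h0 i (Finset.mem_insert_of_mem hi)
    nlinarith [mul_le_mul_of_nonneg_left ihs (by linarith : (0:ℝ) ≤ 1 - f a)]

/-- Geometric tail bound over an interval. -/
lemma hoc_geo (r : ℝ) (h0 : 0 ≤ r) (h1 : r < 1) (a b : ℕ) :
    ∑ l ∈ Finset.Ico a b, r ^ l ≤ r ^ a / (1 - r) := by
  have h1r : 0 < 1 - r := by linarith
  rw [Finset.sum_Ico_eq_sum_range]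
  have heq : ∀ i : ℕ, r ^ (a + i) = r ^ a * r ^ i := fun i => pow_add r a i
  simp_rw [heq, ← Finset.mul_sum]
  rw [div_eq_mul_one_div]
  refine mul_le_mul_of_nonneg_left ?_ (pow_nonneg h0 a)
  have hne : r ≠ 1 := ne_of_lt h1
  rw [geom_sum_eq hne]
  have heq2 : (r ^ (b - a) - 1) / (r - 1) = (1 - r ^ (b - a)) / (1 - r) := by
    rw [div_eq_div_iff (by linarith) (by linarith)]; ring
  rw [heq2]
  have hpow : 0 ≤ r ^ (b - a) := pow_nonneg h0 _
  gcongr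
  linarith

/-- exponential decay of the return probabilities of the
house-of-cards chain. If the reset probabilities satisfy `γ_m ≤ e^{-α m}` with `α > 0`,
then the return probabilities `q_m` (defined by the renewal recursion
`q_0 = 1`, `q_m = ∑_{j=0}^{m-1} q_{m-1-j} π_j γ_j`, where `π_0 = 1` and
`π_{j+1} = π_j (1 - γ_j)`) satisfy `q_m ≤ C e^{-α' m}` for some constant `C > 0` and
some rate `α'` with `0 < α' ≤ α`. -/
theorem houseOfCards_exponential_decay (α : ℝ) (hα : 0 < α)
    (γ : ℕ → ℝ) (hγ : ∀ m, 0 ≤ γ m ∧ γ m < 1)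
    (hdecay : ∀ m : ℕ, γ m ≤ Real.exp (-α * m))
    (pi q : ℕ → ℝ)
    (hpi0 : pi 0 = 1) (hpi : ∀ j, pi (j + 1) = pi j * (1 - γ j))
    (hq0 : q 0 = 1)
    (hq : ∀ m : ℕ, 1 ≤ m → q m = ∑ j ∈ Finset.range m, q (m - 1 - j) * pi j * γ j) :
    ∃ C : ℝ, 0 < C ∧ ∃ α' : ℝ, 0 < α' ∧ α' ≤ α ∧
      ∀ m : ℕ, q m ≤ C * Real.exp (-α' * m) := by
  have hγ0 : ∀ m, 0 ≤ γ m := fun m => (hγ m).1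
  have hγ1 : ∀ m, γ m < 1 := fun m => (hγ m).2
  -- basic facts about pi
  have hpi_pos : ∀ n, 0 < pi n := by
    intro n
    induction n with
    | zero => rw [hpi0]; norm_num
    | succ k ih => rw [hpi k]; exact mul_pos ih (by linarith [hγ1 k])
  have hpi_le_one : ∀ n, pi n ≤ 1 := by
    intro n
    induction n with
    | zero => rw [hpi0]
    | succ k ih => rw [hpi k]; nlinarith [hpi_pos k, hγ0 k, hγ1 k]
  have hpi_anti : Antitone pi := by
    apply antitone_nat_of_succ_le
    intro n
    rw [hpi n]
    nlinarith [hpi_pos n, hγ0 n]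
  have hpi_prod : ∀ n, pi n = ∏ l ∈ Finset.range n, (1 - γ l) := by
    intro n
    induction n with
    | zero => simp [hpi0]
    | succ k ih => rw [hpi k, ih, Finset.prod_range_succ]
  -- telescoping
  have htel : ∀ m, ∑ j ∈ Finset.range m, pi j * γ j = 1 - pi m := by
    intro m
    have h : ∀ j, pi j * γ j = pi j - pi (j + 1) := by
      intro j; rw [hpi j]; ring
    simp_rw [h]
    rw [Finset.sum_range_sub' pi m, hpi0]
  -- geometric ratios
  set r : ℝ := Real.exp (-α) with hr_def
  have hr0 : 0 < r := Real.exp_pos _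
  have hr1 : r < 1 := by rw [hr_def, Real.exp_lt_one_iff]; linarith
  set r2 : ℝ := Real.exp (-(α / 2)) with hr2_def
  have hr20 : 0 < r2 := Real.exp_pos _
  have hr21 : r2 < 1 := by rw [hr2_def, Real.exp_lt_one_iff]; linarith
  -- choose N₀ with geometric tail ≤ 1/2
  obtain ⟨N₀, hN₀⟩ := exists_pow_lt_of_lt_one (show (0:ℝ) < (1 - r) / 2 by linarith) hr1
  -- uniform lower bound on pi
  set δ : ℝ := pi N₀ / 2 with hδ_def
  have hδ_pos : 0 < δ := by
    have := hpi_pos N₀; rw [hδ_def]; linarith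
  have hδ_half : δ ≤ 1 / 2 := by
    have := hpi_le_one N₀; rw [hδ_def]; linarith
  have hδ_le : ∀ N, δ ≤ pi N := by
    intro N
    rcases le_total N N₀ with h | h
    · have := hpi_anti h
      have := hpi_pos N₀
      rw [hδ_def]; linarith
    · have hprod : pi N₀ * ∏ l ∈ Finset.Ico N₀ N, (1 - γ l) = pi N := by
        rw [hpi_prod N₀, hpi_prod N]
        exact Finset.prod_range_mul_prod_Ico _ h
      have hW : 1 - ∑ l ∈ Finset.Ico N₀ N, γ l ≤ ∏ l ∈ Finset.Ico N₀ N, (1 - γ l) :=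
        hoc_weier γ _ (fun i _ => hγ0 i) (fun i _ => (hγ1 i).le)
      have hsum_le : ∑ l ∈ Finset.Ico N₀ N, γ l ≤ r ^ N₀ / (1 - r) := by
        calc ∑ l ∈ Finset.Ico N₀ N, γ l ≤ ∑ l ∈ Finset.Ico N₀ N, r ^ l := by
              apply Finset.sum_le_sum
              intro l _
              have := hdecay l
              rwa [show -α * (l:ℝ) = (l:ℝ) * (-α) by ring, Real.exp_nat_mul, ← hr_def] at this
          _ ≤ r ^ N₀ / (1 - r) := hoc_geo r hr0.le hr1 N₀ N
      have htail : r ^ N₀ / (1 - r) ≤ 1 / 2 := by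
        rw [div_le_div_iff₀ (by linarith) (by norm_num)]
        linarith
      have h12 : (1:ℝ) / 2 ≤ ∏ l ∈ Finset.Ico N₀ N, (1 - γ l) := by linarith
      calc δ = pi N₀ * (1 / 2) := by rw [hδ_def]; ring
        _ ≤ pi N₀ * ∏ l ∈ Finset.Ico N₀ N, (1 - γ l) :=
            mul_le_mul_of_nonneg_left h12 (hpi_pos N₀).le
        _ = pi N := hprod
  -- choose N₁ with small tail
  obtain ⟨N₁, hN₁⟩ := exists_pow_lt_of_lt_one
    (show (0:ℝ) < δ / 2 * (1 - r2) / Real.exp (α / 2) from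
      div_pos (mul_pos (by linarith) (by linarith)) (Real.exp_pos _)) hr21
  have htail_bound : Real.exp (α / 2) * (r2 ^ N₁ / (1 - r2)) ≤ δ / 2 := by
    have he : (0:ℝ) < Real.exp (α / 2) := Real.exp_pos _
    have h1r2 : (0:ℝ) < 1 - r2 := by linarith
    rw [lt_div_iff₀ he] at hN₁
    rw [← mul_div_assoc, div_le_iff₀ h1r2]
    nlinarith
  -- choose the rate α'
  have h1δ : (0:ℝ) < 1 - δ := by linarith
  have hlog_arg : (1:ℝ) < (1 - δ / 2) / (1 - δ) := by
    rw [lt_div_iff₀ h1δ]; linarith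
  set L : ℝ := Real.log ((1 - δ / 2) / (1 - δ)) with hL_def
  have hL_pos : 0 < L := Real.log_pos hlog_arg
  set α' : ℝ := min (α / 2) (L / (N₁ + 1)) with hα'_def
  have hα'_pos : 0 < α' := lt_min (by linarith) (by positivity)
  have hα'_le : α' ≤ α := (min_le_left _ _).trans (by linarith)
  have hα'_half : α' ≤ α / 2 := min_le_left _ _
  -- exponential factor bound
  have hexp_head : Real.exp (α' * N₁) * (1 - δ) ≤ 1 - δ / 2 := by
    have h1 : α' * N₁ ≤ L := by
      have h2 : α' ≤ L / (N₁ + 1) := min_le_right _ _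
      have h3 : (N₁:ℝ) ≥ 0 := Nat.cast_nonneg _
      have h4 : α' * N₁ ≤ L / (N₁ + 1) * N₁ := mul_le_mul_of_nonneg_right h2 h3
      have h5 : L / (N₁ + 1) * N₁ ≤ L := by
        rw [div_mul_eq_mul_div, div_le_iff₀ (by positivity)]
        nlinarith [hL_pos]
      linarith
    have h6 : Real.exp (α' * N₁) ≤ (1 - δ / 2) / (1 - δ) := by
      calc Real.exp (α' * N₁) ≤ Real.exp L := Real.exp_le_exp.mpr h1
        _ = (1 - δ / 2) / (1 - δ) := Real.exp_log (by positivity)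
    calc Real.exp (α' * N₁) * (1 - δ) ≤ (1 - δ / 2) / (1 - δ) * (1 - δ) :=
          mul_le_mul_of_nonneg_right h6 h1δ.le
      _ = 1 - δ / 2 := div_mul_cancel₀ _ h1δ.ne'
  -- the key uniform sum bound
  have hkey : ∀ m : ℕ, ∑ j ∈ Finset.range m,
      Real.exp (α' * (j + 1)) * (pi j * γ j) ≤ 1 := by
    intro m
    set f : ℕ → ℝ := fun j => Real.exp (α' * (j + 1)) * (pi j * γ j) with hf_def
    have hf_nonneg : ∀ j, 0 ≤ f j := fun j => by
      exact mul_nonneg (Real.exp_pos _).le (mul_nonneg (hpi_pos j).le (hγ0 j))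
    set M : ℕ := max m N₁ with hM_def
    have hsub : ∑ j ∈ Finset.range m, f j ≤ ∑ j ∈ Finset.range M, f j :=
      Finset.sum_le_sum_of_subset_of_nonneg
        (Finset.range_subset_range.mpr (le_max_left _ _)) (fun i _ _ => hf_nonneg i)
    have hsplit : ∑ j ∈ Finset.range M, f j =
        ∑ j ∈ Finset.range N₁, f j + ∑ j ∈ Finset.Ico N₁ M, f j :=
      (Finset.sum_range_add_sum_Ico f (le_max_right _ _)).symm
    have hhead : ∑ j ∈ Finset.range N₁, f j ≤ 1 - δ / 2 := by
      have h1 : ∑ j ∈ Finset.range N₁, f j ≤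
          ∑ j ∈ Finset.range N₁, Real.exp (α' * N₁) * (pi j * γ j) := by
        apply Finset.sum_le_sum
        intro j hj
        have hj' : (j:ℝ) + 1 ≤ N₁ := by
          have := Finset.mem_range.mp hj
          exact_mod_cast Nat.succ_le_of_lt this
        exact mul_le_mul_of_nonneg_right
          (Real.exp_le_exp.mpr (mul_le_mul_of_nonneg_left hj' hα'_pos.le))
          (mul_nonneg (hpi_pos j).le (hγ0 j))
      rw [← Finset.mul_sum, htel N₁] at h1
      have h2 : Real.exp (α' * N₁) * (1 - pi N₁) ≤ Real.exp (α' * N₁) * (1 - δ) :=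
        mul_le_mul_of_nonneg_left (by linarith [hδ_le N₁]) (Real.exp_pos _).le
      linarith
    have htail : ∑ j ∈ Finset.Ico N₁ M, f j ≤ δ / 2 := by
      have h1 : ∑ j ∈ Finset.Ico N₁ M, f j ≤
          ∑ j ∈ Finset.Ico N₁ M, Real.exp (α / 2) * r2 ^ j := by
        apply Finset.sum_le_sum
        intro j _
        have hγj : γ j ≤ r ^ j := by
          have := hdecay j
          rwa [show -α * (j:ℝ) = (j:ℝ) * (-α) by ring, Real.exp_nat_mul, ← hr_def] at this
        have hpg : pi j * γ j ≤ r ^ j := by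
          calc pi j * γ j ≤ 1 * γ j :=
                mul_le_mul_of_nonneg_right (hpi_le_one j) (hγ0 j)
            _ = γ j := one_mul _
            _ ≤ r ^ j := hγj
        have hexp_le : Real.exp (α' * (j + 1)) ≤ Real.exp (α / 2 * (j + 1)) := by
          apply Real.exp_le_exp.mpr
          apply mul_le_mul_of_nonneg_right hα'_half
          positivity
        calc f j ≤ Real.exp (α / 2 * (j + 1)) * r ^ j := by
              apply mul_le_mul hexp_le hpg
                (mul_nonneg (hpi_pos j).le (hγ0 j)) (Real.exp_pos _).le
          _ = Real.exp (α / 2) * r2 ^ j := by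
              rw [hr_def, hr2_def, ← Real.exp_nat_mul, ← Real.exp_nat_mul]
              rw [← Real.exp_add, ← Real.exp_add]
              congr 1
              ring
      have h2 : ∑ j ∈ Finset.Ico N₁ M, Real.exp (α / 2) * r2 ^ j =
          Real.exp (α / 2) * ∑ j ∈ Finset.Ico N₁ M, r2 ^ j := by
        rw [Finset.mul_sum]
      have h3 : ∑ j ∈ Finset.Ico N₁ M, r2 ^ j ≤ r2 ^ N₁ / (1 - r2) :=
        hoc_geo r2 hr20.le hr21 N₁ M
      calc ∑ j ∈ Finset.Ico N₁ M, f j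
          ≤ Real.exp (α / 2) * ∑ j ∈ Finset.Ico N₁ M, r2 ^ j := by rw [← h2]; exact h1
        _ ≤ Real.exp (α / 2) * (r2 ^ N₁ / (1 - r2)) :=
            mul_le_mul_of_nonneg_left h3 (Real.exp_pos _).le
        _ ≤ δ / 2 := htail_bound
    calc ∑ j ∈ Finset.range m, f j ≤ ∑ j ∈ Finset.range M, f j := hsub
      _ = ∑ j ∈ Finset.range N₁, f j + ∑ j ∈ Finset.Ico N₁ M, f j := hsplit
      _ ≤ (1 - δ / 2) + δ / 2 := add_le_add hhead htail
      _ = 1 := by ring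
  -- main induction
  have hmain : ∀ m : ℕ, q m ≤ Real.exp (-α' * m) := by
    intro m
    induction m using Nat.strong_induction_on with
    | _ m ih =>
      rcases Nat.eq_zero_or_pos m with hm | hm
      · subst hm; simp [hq0]
      · rw [hq m hm]
        have hstep : ∀ j ∈ Finset.range m,
            q (m - 1 - j) * pi j * γ j ≤
              Real.exp (-α' * m) * (Real.exp (α' * (j + 1)) * (pi j * γ j)) := by
          intro j hj
          have hjm : j < m := Finset.mem_range.mp hj
          have hcast : ((m - 1 - j : ℕ) : ℝ) = (m : ℝ) - ((j : ℝ) + 1) := by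
            have h1 : m - 1 - j = m - (j + 1) := by omega
            rw [h1, Nat.cast_sub (by omega)]
            push_cast
            ring
          have hih := ih (m - 1 - j) (by omega)
          have hexp_eq : Real.exp (-α' * ((m - 1 - j : ℕ) : ℝ)) =
              Real.exp (-α' * m) * Real.exp (α' * (j + 1)) := by
            rw [← Real.exp_add, hcast]
            congr 1
            ring
          calc q (m - 1 - j) * pi j * γ j
              ≤ Real.exp (-α' * ((m - 1 - j : ℕ) : ℝ)) * pi j * γ j := by
                apply mul_le_mul_of_nonneg_right _ (hγ0 j)
                exact mul_le_mul_of_nonneg_right hih (hpi_pos j).le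
            _ = Real.exp (-α' * m) * (Real.exp (α' * (j + 1)) * (pi j * γ j)) := by
                rw [hexp_eq]; ring
        calc ∑ j ∈ Finset.range m, q (m - 1 - j) * pi j * γ j
            ≤ ∑ j ∈ Finset.range m,
                Real.exp (-α' * m) * (Real.exp (α' * (j + 1)) * (pi j * γ j)) :=
              Finset.sum_le_sum hstep
          _ = Real.exp (-α' * m) *
              ∑ j ∈ Finset.range m, Real.exp (α' * (j + 1)) * (pi j * γ j) := by
              rw [Finset.mul_sum]
          _ ≤ Real.exp (-α' * m) * 1 :=
              mul_le_mul_of_nonneg_left (hkey m) (Real.exp_pos _).le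
          _ = Real.exp (-α' * m) := mul_one _
  exact ⟨1, one_pos, α', hα'_pos, hα'_le, fun m => by rw [one_mul]; exact hmain m⟩
end
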